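/- arXiv:2105.12274 — 2 statements merged into one kernel-verified Lean document; each statement's English description precedes it below -/
import Mathlib

section
/- Let u ∈ S_n, set v = û and w = û s(1,n) in S_{n+1}. Suppose 1 ≤ i < j ≤ n+1 are such that v ⋖ v t_{i,j} and v t_{i,j} ≤ w (so v t_{i,j} is an atom of the Bruhat interval [v,w]), and suppose j−1 < k ≤ n+1 is such that v ≤ w t_{j−1,k} and w t_{j−1,k} ⋖ w (so w t_{j−1,k} is a coatom of [v,w]). Then v t_{i,j} ≰ w t_{j−1,k} in the Bruhat order. -/
/-- `w : ℕ → ℕ` represents a permutation of `{1,…,m}` (extended by the identity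
elsewhere); this encodes an element of the symmetric group `S_m`. -/
def IsPermOn (m : ℕ) (w : ℕ → ℕ) : Prop :=
  Set.BijOn w (Set.Icc 1 m) (Set.Icc 1 m) ∧ ∀ x, x ∉ Set.Icc 1 m → w x = x

/-- The increasing rearrangement of `(w(1), …, w(i))`. -/
def sortedInit (w : ℕ → ℕ) (i : ℕ) : List ℕ :=
  Multiset.sort ((Multiset.range i).map fun j => w (j + 1)) (· ≤ ·)

/-- The (strong) Bruhat order on `S_m`: `v ≤ w` iff for every `1 ≤ i ≤ m` the increasing
rearrangement of `(v(1),…,v(i))` is componentwise `≤` that of `(w(1),…,w(i))`. -/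
def bruhatLE (m : ℕ) (v w : ℕ → ℕ) : Prop :=
  ∀ i, 1 ≤ i → i ≤ m → List.Forall₂ (· ≤ ·) (sortedInit v i) (sortedInit w i)

/-- Strict Bruhat order. -/
def bruhatLT (m : ℕ) (v w : ℕ → ℕ) : Prop :=
  bruhatLE m v w ∧ v ≠ w

/-- `v ⋖ w` in the Bruhat order on `S_m`: `v < w` and no `z ∈ S_m` satisfies `v < z < w`. -/
def bruhatCovBy (m : ℕ) (v w : ℕ → ℕ) : Prop :=
  bruhatLT m v w ∧ ∀ z, IsPermOn m z → ¬(bruhatLT m v z ∧ bruhatLT m z w)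

/-- The transposition `t_{i,j}` interchanging `i` and `j`. -/
def transp (i j : ℕ) : ℕ → ℕ := fun x => if x = i then j else if x = j then i else x

/-- `û ∈ S_{n+1}` obtained from `u ∈ S_n` by putting `1` at the head:
`û(1) = 1` and `û(i) = u(i−1) + 1` for `2 ≤ i ≤ n+1`. -/
def uhat (u : ℕ → ℕ) : ℕ → ℕ := fun i => if i ≤ 1 then i else u (i - 1) + 1

/-- `s(1,n) = s₁ s₂ ⋯ s_n` as a permutation (product = composition of functions,
`s_k = t_{k,k+1}`). -/
def sOneTo : ℕ → (ℕ → ℕ)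
  | 0 => id
  | m + 1 => sOneTo m ∘ transp (m + 1) (m + 2)

private lemma forall2_countP_le (t : ℕ) : ∀ {l1 l2 : List ℕ}, List.Forall₂ (· ≤ ·) l1 l2 →
    l1.countP (fun x => decide (t ≤ x)) ≤ l2.countP (fun x => decide (t ≤ x)) := by
  intro l1 l2 h
  induction h with
  | nil => simp
  | @cons a b l1 l2 hab h ih =>
    rw [List.countP_cons, List.countP_cons]
    by_cases h1 : t ≤ a <;> by_cases h2 : t ≤ b <;> simp [h1, h2] <;> omega

private lemma countP_sortedInit (f : ℕ → ℕ) (m t : ℕ) :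
    (sortedInit f m).countP (fun x => decide (t ≤ x)) =
      ∑ q ∈ Finset.range m, if t ≤ f (q+1) then 1 else 0 := by
  have h1 : ∀ s : Multiset ℕ, (Multiset.sort s (· ≤ ·)).countP (fun x => decide (t ≤ x)) =
      Multiset.countP (fun x => t ≤ x) s := by
    intro s
    rw [← Multiset.coe_countP, Multiset.sort_eq]
  rw [sortedInit, h1]
  induction m with
  | zero => simp
  | succ m ih =>
    rw [Multiset.range_succ, Multiset.map_cons, Multiset.countP_cons, Finset.sum_range_succ, ih]

private lemma bruhat_count {m : ℕ} {f g : ℕ → ℕ} (h : bruhatLE m f g) {i : ℕ}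
    (h1 : 1 ≤ i) (h2 : i ≤ m) (t : ℕ) :
    (∑ q ∈ Finset.range i, if t ≤ f (q+1) then 1 else 0) ≤
      ∑ q ∈ Finset.range i, if t ≤ g (q+1) then 1 else 0 := by
  rw [← countP_sortedInit, ← countP_sortedInit]
  exact forall2_countP_le t (h i h1 h2)

private lemma transp_fst (i j : ℕ) : transp i j i = j := by simp [transp]

private lemma transp_snd {i j : ℕ} (h : i ≠ j) : transp i j j = i := by
  simp [transp, h.symm]

private lemma transp_other {i j x : ℕ} (h1 : x ≠ i) (h2 : x ≠ j) : transp i j x = x := by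
  simp [transp, h1, h2]

private lemma sOneTo_gt : ∀ m x, m + 1 < x → sOneTo m x = x := by
  intro m
  induction m with
  | zero => intro x _; rfl
  | succ m ih =>
    intro x hx
    show sOneTo m (transp (m+1) (m+2) x) = x
    rw [transp_other (by omega) (by omega)]
    exact ih x (by omega)

private lemma sOneTo_top : ∀ m, sOneTo m (m + 1) = 1 := by
  intro m
  induction m with
  | zero => rfl
  | succ m ih =>
    show sOneTo m (transp (m+1) (m+2) (m+2)) = 1
    rw [transp_snd (by omega)]
    exact ih

private lemma sOneTo_lt : ∀ m x, 1 ≤ x → x ≤ m → sOneTo m x = x + 1 := by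
  intro m
  induction m with
  | zero => intro x h1 h2; omega
  | succ m ih =>
    intro x h1 h2
    show sOneTo m (transp (m+1) (m+2) x) = x + 1
    rcases eq_or_lt_of_le h2 with rfl | hx
    · rw [transp_fst]
      exact sOneTo_gt m (m+2) (by omega)
    · rw [transp_other (by omega) (by omega)]
      exact ih x h1 (by omega)

/-- Let `v = û`, `w = û·s(1,n)` in `S_{n+1}`. If `v·t_{i,j}` is an atom of the Bruhat
interval `[v,w]` (i.e. `v ⋖ v·t_{i,j}` and `v·t_{i,j} ≤ w`) and `w·t_{j−1,k}` is a coatom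
of `[v,w]` (i.e. `v ≤ w·t_{j−1,k}` and `w·t_{j−1,k} ⋖ w`) with `j−1 < k ≤ n+1`, then
`v·t_{i,j} ≰ w·t_{j−1,k}` in the Bruhat order. -/
theorem stmt13 (n : ℕ) (hn : 1 ≤ n) (u : ℕ → ℕ) (hu : IsPermOn n u)
    (i j k : ℕ) (hi : 1 ≤ i) (hij : i < j) (hj : j ≤ n + 1)
    (hjk : j - 1 < k) (hk : k ≤ n + 1)
    (hatom : bruhatCovBy (n + 1) (uhat u) (uhat u ∘ transp i j) ∧
      bruhatLE (n + 1) (uhat u ∘ transp i j) (uhat u ∘ sOneTo n))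
    (hcoatom : bruhatLE (n + 1) (uhat u) (uhat u ∘ sOneTo n ∘ transp (j - 1) k) ∧
      bruhatCovBy (n + 1) (uhat u ∘ sOneTo n ∘ transp (j - 1) k) (uhat u ∘ sOneTo n)) :
    ¬ bruhatLE (n + 1) (uhat u ∘ transp i j) (uhat u ∘ sOneTo n ∘ transp (j - 1) k) := by
  
  intro hcon
  obtain ⟨a, rfl⟩ : ∃ a, i = a + 1 := ⟨i - 1, by omega⟩
  obtain ⟨m, rfl⟩ : ∃ m, j = m + 2 := ⟨j - 2, by omega⟩
  have hsub : (m + 2 : ℕ) - 1 = m + 1 := rfl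
  rw [hsub] at hjk hcoatom hcon
  have hv1 : uhat u 1 = 1 := by simp [uhat]
  have hvpos : ∀ x, 1 ≤ x → 1 ≤ uhat u x := by
    intro x hx; unfold uhat; split <;> omega
  -- Step 1 : v (a+1) < v (m+2)
  have hvij : uhat u (a + 1) < uhat u (m + 2) := by
    rcases lt_trichotomy (uhat u (a + 1)) (uhat u (m + 2)) with h | h | h
    · exact h
    · exfalso
      apply hatom.1.1.2
      funext z
      simp only [Function.comp_apply]
      rcases eq_or_ne z (a + 1) with rfl | hz1
      · rw [transp_fst]; exact h
      rcases eq_or_ne z (m + 2) with rfl | hz2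
      · rw [transp_snd (by omega)]; exact h.symm
      · rw [transp_other hz1 hz2]
    · exfalso
      have hc := bruhat_count hatom.1.1.1 (show 1 ≤ a + 1 by omega)
        (show a + 1 ≤ n + 1 by omega) (uhat u (a + 1))
      rw [Finset.sum_range_succ, Finset.sum_range_succ] at hc
      have he : (∑ q ∈ Finset.range a,
            if uhat u (a + 1) ≤ (uhat u ∘ transp (a + 1) (m + 2)) (q + 1) then 1 else 0) =
          ∑ q ∈ Finset.range a, if uhat u (a + 1) ≤ uhat u (q + 1) then 1 else 0 := by
        apply Finset.sum_congr rfl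
        intro q hq
        have hq' := Finset.mem_range.mp hq
        simp only [Function.comp_apply]
        simp only [transp_other (show q + 1 ≠ a + 1 by omega) (show q + 1 ≠ m + 2 by omega)]
      rw [he] at hc
      simp only [Function.comp_apply, transp_fst] at hc
      rw [if_pos le_rfl, if_neg (by omega)] at hc
      omega
  -- Step 2 : w k < w (m+1)
  have hwm1 : sOneTo n (m + 1) = m + 2 := sOneTo_lt n (m + 1) (by omega) (by omega)
  have hwk : uhat u (sOneTo n k) < uhat u (sOneTo n (m + 1)) := by
    rcases lt_trichotomy (uhat u (sOneTo n k)) (uhat u (sOneTo n (m + 1))) with h | h | h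
    · exact h
    · exfalso
      apply hcoatom.2.1.2
      funext z
      simp only [Function.comp_apply]
      rcases eq_or_ne z (m + 1) with rfl | hz1
      · rw [transp_fst]; exact h
      rcases eq_or_ne z k with rfl | hz2
      · rw [transp_snd (by omega)]; exact h.symm
      · rw [transp_other hz1 hz2]
    · exfalso
      have hc := bruhat_count hcoatom.2.1.1 (show 1 ≤ m + 1 by omega)
        (show m + 1 ≤ n + 1 by omega) (uhat u (sOneTo n k))
      rw [Finset.sum_range_succ, Finset.sum_range_succ] at hc
      have he : (∑ q ∈ Finset.range m,
            if uhat u (sOneTo n k) ≤ (uhat u ∘ sOneTo n ∘ transp (m + 1) k) (q + 1)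
              then 1 else 0) =
          ∑ q ∈ Finset.range m,
            if uhat u (sOneTo n k) ≤ (uhat u ∘ sOneTo n) (q + 1) then 1 else 0 := by
        apply Finset.sum_congr rfl
        intro q hq
        have hq' := Finset.mem_range.mp hq
        simp only [Function.comp_apply]
        simp only [transp_other (show q + 1 ≠ m + 1 by omega) (show q + 1 ≠ k by omega)]
      rw [he] at hc
      simp only [Function.comp_apply, transp_fst] at hc
      rw [if_pos le_rfl, if_neg (by omega)] at hc
      omega
  rw [hwm1] at hwk
  -- Step 3 : the contradiction at level m+1 with threshold t = v (m+2)
  have ht2 : 2 ≤ uhat u (m + 2) := by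
    have := hvpos (a + 1) (by omega)
    omega
  have hc := bruhat_count hcon (show 1 ≤ m + 1 by omega)
    (show m + 1 ≤ n + 1 by omega) (uhat u (m + 2))
  have hamem : a ∈ Finset.range (m + 1) := Finset.mem_range.mpr (by omega)
  have hx : (∑ q ∈ Finset.range (m + 1),
        if uhat u (m + 2) ≤ (uhat u ∘ transp (a + 1) (m + 2)) (q + 1) then 1 else 0) =
      1 + ∑ q ∈ (Finset.range (m + 1)).erase a,
        if uhat u (m + 2) ≤ uhat u (q + 1) then 1 else 0 := by
    rw [← Finset.add_sum_erase _ _ hamem]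
    congr 1
    · simp only [Function.comp_apply, transp_fst]
      exact if_pos le_rfl
    · apply Finset.sum_congr rfl
      intro q hq
      obtain ⟨hqa, hqr⟩ := Finset.mem_erase.mp hq
      have hq' := Finset.mem_range.mp hqr
      simp only [Function.comp_apply]
      simp only [transp_other (show q + 1 ≠ a + 1 by omega) (show q + 1 ≠ m + 2 by omega)]
  have hv : (∑ q ∈ Finset.range (m + 1),
        if uhat u (m + 2) ≤ uhat u (q + 1) then 1 else 0) =
      ∑ q ∈ (Finset.range (m + 1)).erase a,
        if uhat u (m + 2) ≤ uhat u (q + 1) then 1 else 0 := by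
    rw [← Finset.add_sum_erase _ _ hamem, if_neg (by omega), zero_add]
  have hy : (∑ q ∈ Finset.range (m + 1),
        if uhat u (m + 2) ≤ (uhat u ∘ sOneTo n ∘ transp (m + 1) k) (q + 1) then 1 else 0) =
      ∑ q ∈ Finset.range m, if uhat u (m + 2) ≤ uhat u (q + 1 + 1) then 1 else 0 := by
    rw [Finset.sum_range_succ]
    have hlast : (if uhat u (m + 2) ≤ (uhat u ∘ sOneTo n ∘ transp (m + 1) k) (m + 1)
        then 1 else 0) = 0 := by
      simp only [Function.comp_apply, transp_fst]
      exact if_neg (by omega)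
    rw [hlast, add_zero]
    apply Finset.sum_congr rfl
    intro q hq
    have hq' := Finset.mem_range.mp hq
    simp only [Function.comp_apply]
    simp only [transp_other (show q + 1 ≠ m + 1 by omega) (show q + 1 ≠ k by omega),
      sOneTo_lt n (q + 1) (by omega) (by omega)]
  have hv2 : (∑ q ∈ Finset.range (m + 1),
        if uhat u (m + 2) ≤ uhat u (q + 1) then 1 else 0) =
      ∑ q ∈ Finset.range m, if uhat u (m + 2) ≤ uhat u (q + 1 + 1) then 1 else 0 := by
    rw [Finset.sum_range_succ']
    have h0 : (if uhat u (m + 2) ≤ uhat u (0 + 1) then 1 else 0) = 0 := by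
      rw [show (0 : ℕ) + 1 = 1 from rfl, hv1]
      exact if_neg (by omega)
    rw [h0, add_zero]
  rw [hx, hy] at hc
  omega
end

section
/- Let v ≤ w in S_{n+1} (Bruhat order) and let w_0 ∈ S_{n+1} be the longest element, w_0(i) = n+2−i. Then the affine involution ι : ℝ^{n+1} → ℝ^{n+1} given by ι(x_1,…,x_{n+1}) = (n+2−x_{n+1}, n+2−x_n, …, n+2−x_1) maps the Bruhat interval polytope Q_{v,w} bijectively onto the Bruhat interval polytope Q_{w_0 v w_0, w_0 w w_0}; in particular w_0 v w_0 ≤ w_0 w w_0 and Q_{v,w} and Q_{w_0 v w_0, w_0 w w_0} are isomorphic as lattice polytopes. -/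
/-- The Bruhat interval polytope `Q_{v,w} ⊆ ℝ^{n+1}`: the convex hull of the points
`(z(1),…,z(n+1))` for all permutations `z ∈ S_{n+1}` with `v ≤ z ≤ w`. -/
def BIP (n : ℕ) (v w : ℕ → ℕ) : Set (Fin (n + 1) → ℝ) :=
  convexHull ℝ {p | ∃ z : ℕ → ℕ, IsPermOn (n + 1) z ∧
    bruhatLE (n + 1) v z ∧ bruhatLE (n + 1) z w ∧
    p = fun i : Fin (n + 1) => (z ((i : ℕ) + 1) : ℝ)}

/-- The longest element `w₀ ∈ S_{n+1}`, `w₀(i) = n+2−i`. -/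
def longestElt (n : ℕ) : ℕ → ℕ := fun i => if 1 ≤ i ∧ i ≤ n + 1 then n + 2 - i else i

-- aux
def cnt14 (z : ℕ → ℕ) (i t : ℕ) : ℕ :=
  ((Finset.Icc 1 i).filter fun k => z k ≤ t).card

lemma countP_sortedInit_s14 (z : ℕ → ℕ) (i t : ℕ) :
    (sortedInit z i).countP (fun a => a ≤ t) = cnt14 z i t := by
  have h1 : (sortedInit z i).countP (fun a => a ≤ t)
      = Multiset.countP (fun a => a ≤ t) ((Multiset.range i).map fun j => z (j + 1)) := by
    rw [← Multiset.coe_countP]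
    congr 1
    exact Multiset.sort_eq _ (fun a b : ℕ => a ≤ b)
  rw [h1, Multiset.countP_map]
  have h2 : Multiset.card (Multiset.filter (fun j => z (j + 1) ≤ t) (Multiset.range i))
      = ((Finset.range i).filter fun j => z (j + 1) ≤ t).card := rfl
  rw [h2]
  unfold cnt14
  apply Finset.card_bij (fun k _ => k + 1)
  · intro a ha
    simp only [Finset.mem_filter, Finset.mem_range] at ha
    simp only [Finset.mem_filter, Finset.mem_Icc]
    exact ⟨⟨by omega, by omega⟩, ha.2⟩
  · intro a _ b _ hab; omega
  · intro b hb
    simp only [Finset.mem_filter, Finset.mem_Icc] at hb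
    refine ⟨b - 1, ?_, by omega⟩
    simp only [Finset.mem_filter, Finset.mem_range]
    have e : b - 1 + 1 = b := by omega
    rw [e]
    exact ⟨by omega, hb.2⟩

lemma sortedInit_sorted (z : ℕ → ℕ) (i : ℕ) : (sortedInit z i).Pairwise (· ≤ ·) :=
  Multiset.pairwise_sort _ _

lemma sortedInit_length (z : ℕ → ℕ) (i : ℕ) : (sortedInit z i).length = i := by
  simp [sortedInit]

lemma count_le_of_forall₂ {L L' : List ℕ} (h : List.Forall₂ (· ≤ ·) L L') (t : ℕ) :
    L'.countP (fun a => a ≤ t) ≤ L.countP (fun a => a ≤ t) := by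
  induction h with
  | nil => simp
  | @cons a b l l' hab _ ih =>
    simp only [List.countP_cons]
    have : (if (decide (b ≤ t)) = true then 1 else 0) ≤ (if (decide (a ≤ t)) = true then 1 else 0) := by
      by_cases hb : b ≤ t
      · simp [hb, hab.trans hb]
      · simp [hb]
    omega

lemma forall₂_of_count {L L' : List ℕ} (hL : L.Pairwise (· ≤ ·)) (hL' : L'.Pairwise (· ≤ ·))
    (hlen : L.length = L'.length)
    (h : ∀ t, L'.countP (fun a => a ≤ t) ≤ L.countP (fun a => a ≤ t)) :
    List.Forall₂ (· ≤ ·) L L' := by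
  rw [List.forall₂_iff_get]
  refine ⟨hlen, fun i h₁ h₂ => ?_⟩
  by_contra hc
  push_neg at hc
  set t := L'.get ⟨i, h₂⟩ with ht
  have hub : i + 1 ≤ L'.countP (fun a => a ≤ t) := by
    have hsub : List.Sublist (L'.take (i + 1)) L' := List.take_sublist _ _
    have hall : (L'.take (i + 1)).countP (fun a => a ≤ t) = (L'.take (i + 1)).length := by
      rw [List.countP_eq_length]
      intro a ha
      rw [List.mem_take_iff_getElem] at ha
      obtain ⟨j, hj, rfl⟩ := ha
      simp only [decide_eq_true_eq]
      have : L'.get ⟨j, by omega⟩ ≤ L'.get ⟨i, h₂⟩ := hL'.rel_get_of_le (by simp; omega)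
      simpa [ht] using this
    have hlen' : (L'.take (i + 1)).length = i + 1 := by rw [List.length_take]; omega
    calc i + 1 = (L'.take (i + 1)).countP (fun a => a ≤ t) := by rw [hall, hlen']
    _ ≤ _ := hsub.countP_le
  have hlb : L.countP (fun a => a ≤ t) ≤ i := by
    have hsplit : L.countP (fun a => a ≤ t)
        = (L.take i).countP (fun a => a ≤ t) + (L.drop i).countP (fun a => a ≤ t) := by
      rw [← List.countP_append, List.take_append_drop]
    have hdrop : (L.drop i).countP (fun a => a ≤ t) = 0 := by
      rw [List.countP_eq_zero]
      intro a ha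
      rw [List.mem_drop_iff_getElem] at ha
      obtain ⟨j, hj, rfl⟩ := ha
      simp only [decide_eq_true_eq, not_le]
      have h3 : L.get ⟨i, h₁⟩ ≤ L.get ⟨i + j, by omega⟩ := hL.rel_get_of_le (by simp)
      have h4 : L[i + j] = L.get ⟨i + j, by omega⟩ := rfl
      rw [h4]
      omega
    have htake : (L.take i).countP (fun a => a ≤ t) ≤ i := by
      calc (L.take i).countP (fun a => a ≤ t) ≤ (L.take i).length := List.countP_le_length
      _ ≤ i := by rw [List.length_take]; omega
    omega
  have := h t
  omega

lemma IsPermOn.bounds {m : ℕ} {z : ℕ → ℕ} (hz : IsPermOn m z) {k : ℕ}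
    (h1 : 1 ≤ k) (h2 : k ≤ m) : 1 ≤ z k ∧ z k ≤ m := by
  have := hz.1.mapsTo (Set.mem_Icc.mpr ⟨h1, h2⟩)
  exact Set.mem_Icc.mp this

lemma longestElt_invol (n : ℕ) (x : ℕ) : longestElt n (longestElt n x) = x := by
  unfold longestElt
  split_ifs with h1 h2 h3 <;> omega

lemma isPermOn_longestElt (n : ℕ) : IsPermOn (n + 1) (longestElt n) := by
  have hmem : ∀ x ∈ Set.Icc 1 (n + 1), longestElt n x ∈ Set.Icc 1 (n + 1) := by
    intro x hx
    simp only [Set.mem_Icc] at hx ⊢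
    unfold longestElt
    rw [if_pos ⟨hx.1, hx.2⟩]
    omega
  refine ⟨⟨hmem, ?_, ?_⟩, ?_⟩
  · intro a _ b _ hab
    rw [← longestElt_invol n a, hab, longestElt_invol]
  · intro y hy
    exact ⟨longestElt n y, hmem y hy, longestElt_invol n y⟩
  · intro x hx
    simp only [Set.mem_Icc, not_and, not_le] at hx
    unfold longestElt
    rw [if_neg]
    omega

lemma IsPermOn.comp14 {m : ℕ} {a b : ℕ → ℕ} (ha : IsPermOn m a) (hb : IsPermOn m b) :
    IsPermOn m (a ∘ b) :=
  ⟨ha.1.comp hb.1, fun x hx => by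
    simp only [Function.comp_apply, hb.2 x hx, ha.2 x hx]⟩

lemma conj_conj (n : ℕ) (z : ℕ → ℕ) :
    longestElt n ∘ (longestElt n ∘ z ∘ longestElt n) ∘ longestElt n = z := by
  funext x
  simp [Function.comp, longestElt_invol]

lemma cnt_conj {n : ℕ} {z : ℕ → ℕ} (hz : IsPermOn (n + 1) z) {i : ℕ} (hi : i ≤ n + 1) (t : ℕ) :
    cnt14 (longestElt n ∘ z ∘ longestElt n) i t + (n + 1 - i)
      = ((Finset.Icc 1 (n + 1)).filter fun k => n + 2 - t ≤ z k).card
        + cnt14 z (n + 1 - i) (n + 2 - t - 1) := by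
  have hstep1 : cnt14 (longestElt n ∘ z ∘ longestElt n) i t
      = ((Finset.Icc (n + 1 - i + 1) (n + 1)).filter fun k => n + 2 - t ≤ z k).card := by
    unfold cnt14
    apply Finset.card_bij (fun k _ => n + 2 - k)
    · intro a ha
      simp only [Finset.mem_filter, Finset.mem_Icc] at ha
      obtain ⟨⟨ha1, ha2⟩, hp⟩ := ha
      have e1 : longestElt n a = n + 2 - a := by unfold longestElt; rw [if_pos ⟨ha1, by omega⟩]
      have hzb := hz.bounds (k := n + 2 - a) (by omega) (by omega)
      have e2 : longestElt n (z (n + 2 - a)) = n + 2 - z (n + 2 - a) := by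
        unfold longestElt; rw [if_pos ⟨hzb.1, hzb.2⟩]
      simp only [Function.comp_apply, e1, e2] at hp
      simp only [Finset.mem_filter, Finset.mem_Icc]
      exact ⟨⟨by omega, by omega⟩, by omega⟩
    · intro a ha b hb hab
      simp only [Finset.mem_filter, Finset.mem_Icc] at ha hb
      omega
    · intro b hb
      simp only [Finset.mem_filter, Finset.mem_Icc] at hb
      obtain ⟨⟨hb1, hb2⟩, hp⟩ := hb
      refine ⟨n + 2 - b, ?_, by omega⟩
      simp only [Finset.mem_filter, Finset.mem_Icc]
      have e0 : n + 2 - (n + 2 - b) = b := by omega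
      have e1 : longestElt n (n + 2 - b) = b := by
        unfold longestElt; rw [if_pos ⟨by omega, by omega⟩]; omega
      have hzb := hz.bounds (k := b) (by omega) hb2
      have e2 : longestElt n (z b) = n + 2 - z b := by
        unfold longestElt; rw [if_pos ⟨hzb.1, hzb.2⟩]
      refine ⟨⟨by omega, by omega⟩, ?_⟩
      simp only [Function.comp_apply, e1, e2]
      omega
  have hsplit : ((Finset.Icc 1 (n + 1)).filter fun k => n + 2 - t ≤ z k).card
      = ((Finset.Icc 1 (n + 1 - i)).filter fun k => n + 2 - t ≤ z k).card
        + ((Finset.Icc (n + 1 - i + 1) (n + 1)).filter fun k => n + 2 - t ≤ z k).card := by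
    rw [← Finset.card_union_of_disjoint, ← Finset.filter_union]
    · congr 1
      ext k
      simp only [Finset.mem_filter, Finset.mem_union, Finset.mem_Icc]
      omega
    · apply Finset.disjoint_filter_filter
      rw [Finset.disjoint_left]
      intro k hk1 hk2
      simp only [Finset.mem_Icc] at hk1 hk2
      omega
  have hcompl : ((Finset.Icc 1 (n + 1 - i)).filter fun k => n + 2 - t ≤ z k).card
      + cnt14 z (n + 1 - i) (n + 2 - t - 1) = n + 1 - i := by
    unfold cnt14
    have he : (Finset.Icc 1 (n + 1 - i)).filter (fun k => z k ≤ n + 2 - t - 1)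
        = (Finset.Icc 1 (n + 1 - i)).filter (fun k => ¬ (n + 2 - t ≤ z k)) := by
      apply Finset.filter_congr
      intro k hk
      simp only [Finset.mem_Icc] at hk
      have hzb := hz.bounds hk.1 (by omega)
      constructor <;> omega
    rw [he, Finset.card_filter_add_card_filter_not, Nat.card_Icc]
    omega
  omega

lemma card_filter_perm {n : ℕ} {z : ℕ → ℕ} (hz : IsPermOn (n + 1) z) (s : ℕ) :
    ((Finset.Icc 1 (n + 1)).filter fun k => s ≤ z k).card
      = ((Finset.Icc 1 (n + 1)).filter fun a => s ≤ a).card := by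
  apply Finset.card_bij (fun k _ => z k)
  · intro a ha
    simp only [Finset.mem_filter, Finset.mem_Icc] at ha ⊢
    have := hz.bounds ha.1.1 ha.1.2
    exact ⟨⟨this.1, this.2⟩, ha.2⟩
  · intro a ha b hb hab
    simp only [Finset.mem_filter, Finset.mem_Icc] at ha hb
    exact hz.1.injOn (Set.mem_Icc.mpr ha.1) (Set.mem_Icc.mpr hb.1) hab
  · intro b hb
    simp only [Finset.mem_filter, Finset.mem_Icc] at hb
    obtain ⟨k, hk, hkb⟩ := hz.1.surjOn (Set.mem_Icc.mpr hb.1)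
    simp only [Set.mem_Icc] at hk
    refine ⟨k, ?_, hkb⟩
    simp only [Finset.mem_filter, Finset.mem_Icc]
    exact ⟨⟨hk.1, hk.2⟩, by rw [hkb]; exact hb.2⟩

lemma bruhat_conj {n : ℕ} {v w : ℕ → ℕ} (hv : IsPermOn (n + 1) v) (hw : IsPermOn (n + 1) w)
    (h : bruhatLE (n + 1) v w) :
    bruhatLE (n + 1) (longestElt n ∘ v ∘ longestElt n) (longestElt n ∘ w ∘ longestElt n) := by
  intro i h1 h2
  apply forall₂_of_count (sortedInit_sorted _ _) (sortedInit_sorted _ _)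
    (by rw [sortedInit_length, sortedInit_length])
  intro t
  rw [countP_sortedInit_s14, countP_sortedInit_s14]
  have hv' := cnt_conj hv h2 t
  have hw' := cnt_conj hw h2 t
  have hC := (card_filter_perm hv (n + 2 - t)).trans (card_filter_perm hw (n + 2 - t)).symm
  have hcmp : cnt14 w (n + 1 - i) (n + 2 - t - 1) ≤ cnt14 v (n + 1 - i) (n + 2 - t - 1) := by
    rcases Nat.eq_zero_or_pos (n + 1 - i) with h0 | hpos
    · simp [cnt14, h0]
    · have := count_le_of_forall₂ (h (n + 1 - i) hpos (by omega)) (n + 2 - t - 1)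
      rwa [countP_sortedInit_s14, countP_sortedInit_s14] at this
  omega

noncomputable def iotaAff (n : ℕ) : (Fin (n + 1) → ℝ) →ᵃ[ℝ] (Fin (n + 1) → ℝ) where
  toFun := fun x i => (n + 2 : ℝ) - x i.rev
  linear :=
    { toFun := fun x i => - x i.rev
      map_add' := fun x y => by funext i; simp only [Pi.add_apply]; ring
      map_smul' := fun c x => by
        funext i; simp only [Pi.smul_apply, smul_eq_mul, RingHom.id_apply]; ring }
  map_vadd' := fun p x => by
    funext i
    simp only [vadd_eq_add, Pi.add_apply, LinearMap.coe_mk, AddHom.coe_mk]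
    ring

lemma point_conj {n : ℕ} {z : ℕ → ℕ} (hz : IsPermOn (n + 1) z) :
    (fun i : Fin (n + 1) => (n + 2 : ℝ) - (z ((i.rev : ℕ) + 1) : ℝ))
      = fun i : Fin (n + 1) => (((longestElt n ∘ z ∘ longestElt n) ((i : ℕ) + 1) : ℕ) : ℝ) := by
  funext i
  have hi : (i : ℕ) < n + 1 := i.isLt
  have hrev : ((i.rev : ℕ) + 1) = n + 1 - (i : ℕ) := by
    have := Fin.val_rev i
    omega
  have h1 : longestElt n ((i : ℕ) + 1) = n + 1 - (i : ℕ) := by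
    unfold longestElt; rw [if_pos ⟨by omega, by omega⟩]; omega
  have hzb := hz.bounds (k := n + 1 - (i : ℕ)) (by omega) (by omega)
  have h2 : longestElt n (z (n + 1 - (i : ℕ))) = n + 2 - z (n + 1 - (i : ℕ)) := by
    unfold longestElt; rw [if_pos ⟨hzb.1, hzb.2⟩]
  rw [hrev]
  simp only [Function.comp_apply, h1, h2]
  rw [Nat.cast_sub (by omega)]
  push_cast
  ring


/-- The affine involution `ι(x₁,…,x_{n+1}) = (n+2−x_{n+1}, …, n+2−x₁)` of `ℝ^{n+1}`
maps `Q_{v,w}` bijectively onto `Q_{w₀vw₀, w₀ww₀}`; in particular `w₀vw₀ ≤ w₀ww₀`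
(so the two Bruhat interval polytopes are isomorphic as lattice polytopes). -/
theorem stmt14 (n : ℕ) (v w : ℕ → ℕ) (hv : IsPermOn (n + 1) v) (hw : IsPermOn (n + 1) w)
    (hvw : bruhatLE (n + 1) v w) :
    bruhatLE (n + 1) (longestElt n ∘ v ∘ longestElt n) (longestElt n ∘ w ∘ longestElt n) ∧
    Set.BijOn (fun (x : Fin (n + 1) → ℝ) (i : Fin (n + 1)) => (n + 2 : ℝ) - x i.rev)
      (BIP n v w)
      (BIP n (longestElt n ∘ v ∘ longestElt n) (longestElt n ∘ w ∘ longestElt n)) := by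
  refine ⟨bruhat_conj hv hw hvw, ?_⟩
  have hS : (fun (x : Fin (n + 1) → ℝ) (i : Fin (n + 1)) => (n + 2 : ℝ) - x i.rev) ''
        {p | ∃ z : ℕ → ℕ, IsPermOn (n + 1) z ∧ bruhatLE (n + 1) v z ∧ bruhatLE (n + 1) z w ∧
          p = fun i : Fin (n + 1) => (z ((i : ℕ) + 1) : ℝ)}
      = {p | ∃ z : ℕ → ℕ, IsPermOn (n + 1) z ∧
          bruhatLE (n + 1) (longestElt n ∘ v ∘ longestElt n) z ∧
          bruhatLE (n + 1) z (longestElt n ∘ w ∘ longestElt n) ∧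
          p = fun i : Fin (n + 1) => (z ((i : ℕ) + 1) : ℝ)} := by
    ext p
    constructor
    · rintro ⟨q, ⟨z, hz, h1, h2, rfl⟩, rfl⟩
      exact ⟨longestElt n ∘ z ∘ longestElt n,
        (isPermOn_longestElt n).comp14 (hz.comp14 (isPermOn_longestElt n)),
        bruhat_conj hv hz h1, bruhat_conj hz hw h2, (point_conj hz).symm ▸ rfl⟩
    · rintro ⟨z', hz', h1, h2, rfl⟩
      have hz : IsPermOn (n + 1) (longestElt n ∘ z' ∘ longestElt n) :=
        (isPermOn_longestElt n).comp14 (hz'.comp14 (isPermOn_longestElt n))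
      refine ⟨fun i : Fin (n + 1) => (((longestElt n ∘ z' ∘ longestElt n) ((i : ℕ) + 1) : ℕ) : ℝ),
        ⟨longestElt n ∘ z' ∘ longestElt n, hz, ?_, ?_, rfl⟩, ?_⟩
      · have := bruhat_conj ((isPermOn_longestElt n).comp14 (hv.comp14 (isPermOn_longestElt n))) hz' h1
        rwa [conj_conj] at this
      · have := bruhat_conj hz' ((isPermOn_longestElt n).comp14 (hw.comp14 (isPermOn_longestElt n))) h2
        rwa [conj_conj] at this
      · have := point_conj hz
        rw [conj_conj] at this
        exact this
  have him : (fun (x : Fin (n + 1) → ℝ) (i : Fin (n + 1)) => (n + 2 : ℝ) - x i.rev) '' BIP n v w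
      = BIP n (longestElt n ∘ v ∘ longestElt n) (longestElt n ∘ w ∘ longestElt n) := by
    show ⇑(iotaAff n) '' _ = _
    rw [BIP, AffineMap.image_convexHull]
    rw [BIP, ← hS]
    rfl
  have hinv : Function.Involutive
      (fun (x : Fin (n + 1) → ℝ) (i : Fin (n + 1)) => (n + 2 : ℝ) - x i.rev) := by
    intro x
    funext i
    simp only [Fin.rev_rev]
    ring
  refine ⟨?_, hinv.injective.injOn, ?_⟩
  · intro x hx
    have : (fun (x : Fin (n + 1) → ℝ) (i : Fin (n + 1)) => (n + 2 : ℝ) - x i.rev) x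
        ∈ (fun (x : Fin (n + 1) → ℝ) (i : Fin (n + 1)) => (n + 2 : ℝ) - x i.rev) '' BIP n v w :=
      Set.mem_image_of_mem _ hx
    rwa [him] at this
  · exact him.ge
end
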